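/- For every real ε > 0 and every individually rational mechanism ℳ there exists a near-perfect IKEP instance I (one whose compatibility graph admits a Γ-cycle packing covering all vertices except exactly one) whose compatibility graph contains at least one international Γ-cycle such that opt(I) > (1 − ε) · c_int(I) · SW(ℳ(I)); that is, the lower bound of c_int on the approximation ratio of individually rational mechanisms holds even when restricted to near-perfect instances. -/

import Mathlib

open scoped Classical

/-- An `n`-partitioned compatibility graph: a finite directed graph on a finite
set of natural-number vertices, without self-loops, whose vertex set is
partitioned into `n` nonempty countries. -/
structure PartGraph (n : ℕ) where
  verts : Finset ℕ
  arcs : Finset (ℕ × ℕ)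
  arcs_mem : ∀ p ∈ arcs, p.1 ∈ verts ∧ p.2 ∈ verts
  no_loops : ∀ v, (v, v) ∉ arcs
  country : ℕ → Fin n
  country_nonempty : ∀ i : Fin n, ∃ v ∈ verts, country v = i

/-- Cyclic access to the entries of a list. -/
def cyc (l : List ℕ) (k : ℕ) : ℕ := l.getD (k % l.length) 0

/-- `l` is a (directed) cycle of `G`: a cyclic sequence of at least two distinct
vertices, consecutive ones (cyclically) joined by arcs. -/
def IsCycle {n : ℕ} (G : PartGraph n) (l : List ℕ) : Prop :=
  2 ≤ l.length ∧ l.Nodup ∧ (∀ v ∈ l, v ∈ G.verts) ∧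
    ∀ k < l.length, (cyc l k, cyc l (k + 1)) ∈ G.arcs

/-- All vertices of `l` belong to country `i`. -/
def IsNationalTo {n : ℕ} (G : PartGraph n) (l : List ℕ) (i : Fin n) : Prop :=
  ∀ v ∈ l, G.country v = i

/-- A national cycle: all vertices in one country. -/
def IsNational {n : ℕ} (G : PartGraph n) (l : List ℕ) : Prop :=
  ∃ i, IsNationalTo G l i

/-- An international cycle: not national (equivalently, for cycles, it contains
an international arc). -/
def IsInternational {n : ℕ} (G : PartGraph n) (l : List ℕ) : Prop :=
  ¬ IsNational G l

/-- Position `k` (taken cyclically) is the start of a `V_i`-segment of `l`: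
the vertex there is in country `i` but the cyclically preceding one is not. -/
def segStart {n : ℕ} (G : PartGraph n) (l : List ℕ) (i : Fin n) (k : ℕ) : Prop :=
  G.country (cyc l k) = i ∧ G.country (cyc l (k + l.length - 1)) ≠ i

/-- The size of the run of consecutive (cyclic) positions of `l`, starting at
position `k`, whose vertices are in country `i`.  At a segment start this is
exactly the size of that `V_i`-segment. -/
noncomputable def runLen {n : ℕ} (G : PartGraph n) (l : List ℕ) (i : Fin n) (k : ℕ) : ℕ :=
  ((Finset.range l.length).filter
    fun j => ∀ j' ≤ j, G.country (cyc l (k + j')) = i).card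

/-- The number of `V_i`-segments of the cycle `l`. -/
noncomputable def numSegs {n : ℕ} (G : PartGraph n) (l : List ℕ) (i : Fin n) : ℕ :=
  ((Finset.range l.length).filter fun k => segStart G l i k).card

/-- A set `Γ` of country-specific parameters for `n` countries. -/
structure Params (n : ℕ) where
  icl : ℕ∞
  ncl : Fin n → ℕ∞
  iss : Fin n → ℕ∞
  isn : Fin n → ℕ∞
  icl_ne_one : icl ≠ 1
  ncl_ne_one : ∀ i, ncl i ≠ 1
  iss_pos : ∀ i, 1 ≤ iss i
  isn_pos : ∀ i, 1 ≤ isn i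

/-- `l` is a `Γ`-cycle of `(G, 𝒱)`. -/
def IsGammaCycle {n : ℕ} (G : PartGraph n) (Γ : Params n) (l : List ℕ) : Prop :=
  IsCycle G l ∧
    ((∃ i, IsNationalTo G l i ∧ (l.length : ℕ∞) ≤ Γ.ncl i) ∨
      (IsInternational G l ∧ (l.length : ℕ∞) ≤ Γ.icl ∧
        (∀ i, ∀ k < l.length, segStart G l i k → (runLen G l i k : ℕ∞) ≤ Γ.iss i) ∧
        (∀ i, (numSegs G l i : ℕ∞) ≤ Γ.isn i)))

/-- A cycle packing of `G`: a set of pairwise vertex-disjoint cycles. -/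
def IsPacking {n : ℕ} (G : PartGraph n) (P : Finset (List ℕ)) : Prop :=
  (∀ l ∈ P, IsCycle G l) ∧
    ∀ l ∈ P, ∀ l' ∈ P, l ≠ l' → ∀ v ∈ l, v ∉ l'

/-- The size of a cycle packing: total number of arcs (= vertices) of its cycles. -/
def packSize (P : Finset (List ℕ)) : ℕ := ∑ l ∈ P, l.length

/-- A `Γ`-cycle packing of `(G, 𝒱)`. -/
def IsGammaPackingG {n : ℕ} (G : PartGraph n) (Γ : Params n) (P : Finset (List ℕ)) : Prop :=
  IsPacking G P ∧ ∀ l ∈ P, IsGammaCycle G Γ l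


/-- An IKEP instance `I = ⟨G, 𝒱, Γ⟩`. -/
structure IKEP where
  n : ℕ
  npos : 1 ≤ n
  G : PartGraph n
  prm : Params n

/-- A `Γ`-cycle packing of the instance `I`. -/
def IsGammaPacking (I : IKEP) (P : Finset (List ℕ)) : Prop :=
  IsGammaPackingG I.G I.prm P

/-- The utility `u_i(C)` of country `i` from the cycle `C`: the number of arcs
of `C` entering country `i`, i.e. the number of vertices of `C` in country `i`. -/
noncomputable def cycUtil {n : ℕ} (G : PartGraph n) (i : Fin n) (l : List ℕ) : ℕ :=
  (l.filter fun v => G.country v = i).length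

/-- The utility `u_i(𝒞)` of country `i` from a cycle packing. -/
noncomputable def packUtil {n : ℕ} (G : PartGraph n) (i : Fin n) (P : Finset (List ℕ)) : ℕ :=
  ∑ l ∈ P, cycUtil G i l

/-- `opt(I)`: the maximum size of a `Γ`-cycle packing of `G`. -/
noncomputable def optSize (I : IKEP) : ℕ :=
  sSup {m | ∃ P, IsGammaPacking I P ∧ packSize P = m}

/-- `nat_i(I)`: the maximum size of a `Γ`-cycle packing of the subgraph
`G[V_i]` induced by country `i` (all its cycles are national, so the only
constraint from `Γ` is the national cycle limit `ncl i`). -/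
noncomputable def natSize (I : IKEP) (i : Fin I.n) : ℕ :=
  sSup {m | ∃ P, IsPacking I.G P ∧ (∀ l ∈ P, IsNationalTo I.G l i) ∧
    (∀ l ∈ P, (l.length : ℕ∞) ≤ I.prm.ncl i) ∧ packSize P = m}

/-- A (randomised) mechanism: for every IKEP instance it returns one `Γ`-cycle
packing according to a (finitely supported) probability distribution on the
set `𝒟_I` of all `Γ`-cycle packings of `G`. -/
structure Mechanism where
  dist : IKEP → (Finset (List ℕ) →₀ ℝ)
  nonneg : ∀ I P, 0 ≤ dist I P
  sum_one : ∀ I, ((dist I).sum fun _ p => p) = 1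
  supp : ∀ I P, dist I P ≠ 0 → IsGammaPacking I P

/-- The expected utility `U_i(ℳ(I))` of country `i`. -/
noncomputable def expUtil (M : Mechanism) (I : IKEP) (i : Fin I.n) : ℝ :=
  (M.dist I).sum fun P p => p * (packUtil I.G i P : ℝ)

/-- The expected social welfare `SW(ℳ(I)) = Σ_i U_i(ℳ(I))`: the expected size
of the returned packing. -/
noncomputable def sw (M : Mechanism) (I : IKEP) : ℝ :=
  (M.dist I).sum fun P p => p * (packSize P : ℝ)

/-- Individual rationality. -/
def IndRational (M : Mechanism) : Prop :=
  ∀ I : IKEP, ∀ i : Fin I.n, (natSize I i : ℝ) ≤ expUtil M I i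

/-- Efficiency. -/
def Efficient (M : Mechanism) : Prop :=
  ∀ I : IKEP, sw M I = (optSize I : ℝ)

/-- `Γ' ≤ᵢ Γ`: country `i` misreports by declaring (weakly) smaller
international segment size and segment number; all other parameters agree. -/
def ParamLE {n : ℕ} (i : Fin n) (Γ' Γ : Params n) : Prop :=
  Γ'.icl = Γ.icl ∧ Γ'.ncl = Γ.ncl ∧
    Γ'.iss i ≤ Γ.iss i ∧ Γ'.isn i ≤ Γ.isn i ∧
    (∀ h, h ≠ i → Γ'.iss h = Γ.iss h) ∧ (∀ h, h ≠ i → Γ'.isn h = Γ.isn h)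

/-- Incentive compatibility (with respect to segment size and segment number). -/
def IncentiveCompatible (M : Mechanism) : Prop :=
  ∀ I : IKEP, ∀ i : Fin I.n, ∀ Γ' : Params I.n, ParamLE i Γ' I.prm →
    expUtil M { I with prm := Γ' } i ≤ expUtil M I i

/-- An international `Γ`-cycle of the instance `I`. -/
def IsIntlGammaCycle (I : IKEP) (l : List ℕ) : Prop :=
  IsGammaCycle I.G I.prm l ∧ IsInternational I.G l

/-- `c_int(I)`: the maximum length of an international `Γ`-cycle of `G`. -/
noncomputable def cInt (I : IKEP) : ℕ :=
  sSup {s | ∃ l, IsIntlGammaCycle I l ∧ l.length = s}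


/-- The set of vertices of `G` covered by none of the cycles of `P`. -/
noncomputable def uncovered (I : IKEP) (P : Finset (List ℕ)) : Finset ℕ :=
  I.G.verts.filter fun v => ∀ l ∈ P, v ∉ l

/-- A near-perfect instance: `G` admits a `Γ`-cycle packing leaving exactly one
vertex uncovered. -/
def NearPerfectInstance (I : IKEP) : Prop :=
  ∃ P, IsGammaPacking I P ∧ (uncovered I P).card = 1


/-! ### Auxiliary construction for the lower bound -/

namespace IRLB

lemma cyc_eq_getElem (l : List ℕ) (hL : 0 < l.length) (k : ℕ) :
    cyc l k = l[k % l.length]'(Nat.mod_lt _ hL) := by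
  rw [cyc, List.getD_eq_getElem]

lemma cyc_mod (l : List ℕ) (k : ℕ) : cyc l k = cyc l (k % l.length) := by
  rw [cyc, cyc]
  congr 1
  exact (Nat.mod_mod_of_dvd k dvd_rfl).symm

lemma cyc_congr (l : List ℕ) {a b : ℕ} (h : a % l.length = b % l.length) :
    cyc l a = cyc l b := by
  rw [cyc, cyc, h]

lemma cyc_mem (l : List ℕ) (hL : 0 < l.length) (k : ℕ) : cyc l k ∈ l := by
  rw [cyc_eq_getElem l hL k]
  exact List.getElem_mem _

lemma cyc_inj (l : List ℕ) (hnd : l.Nodup) (hL : 0 < l.length) {a b : ℕ}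
    (h : cyc l a = cyc l b) : a % l.length = b % l.length := by
  rw [cyc_eq_getElem l hL a, cyc_eq_getElem l hL b] at h
  exact (List.Nodup.getElem_inj_iff hnd).mp h

/-- The arc relation of the constructed graph: a directed ring `0 → 1 → ⋯ → m-1 → 0`
in country `0`, together with a 2-cycle `i ↔ m + i` for every `i < m - 1`. -/
def ArcOK (m u v : ℕ) : Prop :=
  (u < m ∧ v = (u + 1) % m) ∨ (u < m - 1 ∧ v = m + u) ∨ (v < m - 1 ∧ u = m + v)

noncomputable def myGraph (m : ℕ) (hm : 2 ≤ m) : PartGraph 2 where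
  verts := Finset.range (2 * m - 1)
  arcs := ((Finset.range (2 * m - 1)) ×ˢ (Finset.range (2 * m - 1))).filter
    fun p => ArcOK m p.1 p.2
  arcs_mem := by
    intro p hp
    exact Finset.mem_product.mp (Finset.mem_filter.mp hp).1
  no_loops := by
    intro v hv
    have h := (Finset.mem_filter.mp hv).2
    rcases h with ⟨h1, h2⟩ | ⟨h1, h2⟩ | ⟨h1, h2⟩
    · rcases Nat.lt_or_ge (v + 1) m with h3 | h3
      · rw [Nat.mod_eq_of_lt h3] at h2; omega
      · have hvm : v + 1 = m := by omega
        rw [hvm, Nat.mod_self] at h2; omega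
    · omega
    · omega
  country := fun v => if v < m then 0 else 1
  country_nonempty := by
    intro i
    fin_cases i
    · refine ⟨0, ?_, ?_⟩
      · simp only [Finset.mem_range]; omega
      · simp only [if_pos (show 0 < m by omega)]
        decide
    · refine ⟨m, ?_, ?_⟩
      · simp only [Finset.mem_range]; omega
      · simp only [if_neg (lt_irrefl m)]
        decide

lemma mem_arcs (m : ℕ) (hm : 2 ≤ m) {u v : ℕ} :
    (u, v) ∈ (myGraph m hm).arcs ↔ ArcOK m u v := by
  constructor
  · intro h; exact (Finset.mem_filter.mp h).2
  · intro h
    refine Finset.mem_filter.mpr ⟨Finset.mem_product.mpr ⟨?_, ?_⟩, h⟩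
    · simp only [Finset.mem_range]
      rcases h with ⟨h1, h2⟩ | ⟨h1, h2⟩ | ⟨h1, h2⟩ <;> omega
    · simp only [Finset.mem_range]
      rcases h with ⟨h1, h2⟩ | ⟨h1, h2⟩ | ⟨h1, h2⟩
      · have := Nat.mod_lt (u + 1) (show 0 < m by omega); omega
      · omega
      · omega

lemma country_zero (m : ℕ) (hm : 2 ≤ m) {v : ℕ} (hv : v < m) :
    (myGraph m hm).country v = 0 := by
  simp only [myGraph, if_pos hv]

lemma country_one (m : ℕ) (hm : 2 ≤ m) {v : ℕ} (hv : ¬ v < m) :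
    (myGraph m hm).country v = 1 := by
  simp only [myGraph, if_neg hv]

def myParams (m : ℕ) (hm : 2 ≤ m) : Params 2 where
  icl := 2
  ncl := fun i => if i = 0 then (m : ℕ∞) else 0
  iss := fun _ => ⊤
  isn := fun _ => ⊤
  icl_ne_one := by decide
  ncl_ne_one := by
    intro i
    by_cases h : i = 0
    · simp only [h, if_pos rfl]
      intro hc
      have h2 : ((m : ℕ) : ℕ∞) = ((1 : ℕ) : ℕ∞) := by
        simpa using hc
      have := Nat.cast_injective h2
      omega
    · simp only [if_neg h]; decide
  iss_pos := fun _ => le_top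
  isn_pos := fun _ => le_top

noncomputable def myI (m : ℕ) (hm : 2 ≤ m) : IKEP :=
  { n := 2, npos := by omega, G := myGraph m hm, prm := myParams m hm }

/-- Classification of all cycles in the constructed graph: every cycle is
either one of the international 2-cycles `i ↔ m+i`, or the full national ring. -/
lemma classify (m : ℕ) (hm : 2 ≤ m) {l : List ℕ} (h : IsCycle (myGraph m hm) l) :
    (∃ i, i < m - 1 ∧ (l = [i, m + i] ∨ l = [m + i, i])) ∨
      (l.length = m ∧ ∀ v ∈ l, v < m) := by
  obtain ⟨hL2, hnd, hmem, harc⟩ := h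
  have hL0 : 0 < l.length := by omega
  have harc' : ∀ k, ArcOK m (cyc l k) (cyc l (k + 1)) := by
    intro k
    have h1 : cyc l k = cyc l (k % l.length) := cyc_mod l k
    have h2 : cyc l (k + 1) = cyc l (k % l.length + 1) := by
      apply cyc_congr
      conv_lhs => rw [Nat.add_mod]
      conv_rhs => rw [Nat.add_mod]
      rw [Nat.mod_mod_of_dvd k dvd_rfl]
    rw [h1, h2]
    exact (mem_arcs m hm).mp (harc (k % l.length) (Nat.mod_lt _ hL0))
  by_cases hall : ∀ v ∈ l, v < m
  · right
    refine ⟨?_, hall⟩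
    have step : ∀ k, cyc l (k + 1) = (cyc l k + 1) % m := by
      intro k
      rcases harc' k with ⟨h1, h2⟩ | ⟨h1, h2⟩ | ⟨h1, h2⟩
      · exact h2
      · have := hall _ (cyc_mem l hL0 (k + 1)); omega
      · have := hall _ (cyc_mem l hL0 k); omega
    have iter : ∀ k, cyc l k = (cyc l 0 + k) % m := by
      intro k
      induction k with
      | zero => simpa using (Nat.mod_eq_of_lt (hall _ (cyc_mem l hL0 0))).symm
      | succ n ih =>
          rw [step n, ih]
          have e : cyc l 0 + (n + 1) = cyc l 0 + n + 1 := by ring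
          rw [e, Nat.add_mod (cyc l 0 + n) 1 m, Nat.mod_eq_of_lt (show 1 < m by omega)]
    have hdvd : m ∣ l.length := by
      have h1 : cyc l l.length = cyc l 0 := by
        apply cyc_congr; simp
      rw [iter l.length, iter 0] at h1
      have h2 : cyc l 0 + l.length ≡ cyc l 0 + 0 [MOD m] := by
        simpa [Nat.ModEq] using h1
      exact Nat.modEq_zero_iff_dvd.mp (Nat.ModEq.add_left_cancel' _ h2)
    have hle : l.length ≤ m := by
      have hsub : l.toFinset ⊆ Finset.range m := by
        intro v hv
        exact Finset.mem_range.mpr (hall v (List.mem_toFinset.mp hv))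
      have := Finset.card_le_card hsub
      rwa [List.toFinset_card_of_nodup hnd, Finset.card_range] at this
    exact Nat.le_antisymm hle (Nat.le_of_dvd (by omega) hdvd)
  · left
    push_neg at hall
    obtain ⟨v, hvl, hvm⟩ := hall
    obtain ⟨j, hj, hje⟩ := List.mem_iff_getElem.mp hvl
    have hveq : cyc l j = v := by
      rw [cyc_eq_getElem l hL0]
      simp only [Nat.mod_eq_of_lt hj]
      exact hje
    have hv' : m ≤ cyc l j := by omega
    -- the arc out of position j
    have hout : cyc l (j + 1) < m - 1 ∧ cyc l j = m + cyc l (j + 1) := by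
      rcases harc' j with ⟨h1, h2⟩ | ⟨h1, h2⟩ | ⟨h1, h2⟩
      · omega
      · omega
      · exact ⟨h1, h2⟩
    set i := cyc l (j + 1) with hi
    -- the arc into position j
    have hper : cyc l (j + l.length - 1 + 1) = cyc l j := by
      have e : j + l.length - 1 + 1 = j + l.length := by omega
      rw [e]
      apply cyc_congr
      exact Nat.add_mod_right j l.length
    have houtb : cyc l j = m + i := hout.2
    have hpred : cyc l (j + l.length - 1) = i := by
      have h2 := harc' (j + l.length - 1)
      rw [hper] at h2
      rcases h2 with ⟨h1, h2⟩ | ⟨h1, h2⟩ | ⟨h1, h2⟩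
      · have := Nat.mod_lt (cyc l (j + l.length - 1) + 1) (show 0 < m by omega)
        omega
      · omega
      · omega
    have hLeq : l.length = 2 := by
      have ha : (j + l.length - 1) % l.length = (j + 1) % l.length :=
        cyc_inj l hnd hL0 (by rw [hpred])
      have hb : (j + 1) ≡ (j + l.length - 1) [MOD l.length] := ha.symm
      have hdvd : l.length ∣ (j + l.length - 1) - (j + 1) :=
        (Nat.modEq_iff_dvd' (by omega)).mp hb
      obtain ⟨c, hc⟩ := hdvd
      have he : (j + l.length - 1) - (j + 1) = l.length - 2 := by omega
      rw [he] at hc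
      rcases Nat.eq_zero_or_pos c with hc0 | hc0
      · subst hc0
        simp at hc
        omega
      · have h3 : l.length ≤ l.length * c := Nat.le_mul_of_pos_right _ hc0
        rw [← hc] at h3
        omega
    obtain ⟨a, b, rfl⟩ : ∃ a b, l = [a, b] := by
      rcases l with _ | ⟨a, _ | ⟨b, _ | ⟨c, t⟩⟩⟩
      · simp at hLeq
      · simp at hLeq
      · exact ⟨a, b, rfl⟩
      · simp at hLeq
    have hc0 : cyc [a, b] 0 = a := by simp [cyc]
    have hc1 : cyc [a, b] 1 = b := by simp [cyc]
    refine ⟨i, hout.1, ?_⟩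
    rcases Nat.mod_two_eq_zero_or_one j with hj2 | hj2
    · -- j even : cyc j = a, cyc (j+1) = b
      have e1 : cyc [a, b] j = a := by
        rw [cyc_mod]
        have : j % [a, b].length = 0 := by
          simp only [List.length_cons, List.length_nil]
          omega
        rw [this, hc0]
      have e2 : cyc [a, b] (j + 1) = b := by
        rw [cyc_mod]
        have : (j + 1) % [a, b].length = 1 := by
          simp only [List.length_cons, List.length_nil]
          omega
        rw [this, hc1]
      right
      have ha' : a = m + i := by rw [← e1]; exact hout.2
      have hb' : b = i := by rw [← e2, hi]
      rw [ha', hb']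
    · have e1 : cyc [a, b] j = b := by
        rw [cyc_mod]
        have : j % [a, b].length = 1 := by
          simp only [List.length_cons, List.length_nil]
          omega
        rw [this, hc1]
      have e2 : cyc [a, b] (j + 1) = a := by
        rw [cyc_mod]
        have : (j + 1) % [a, b].length = 0 := by
          simp only [List.length_cons, List.length_nil]
          omega
        rw [this, hc0]
      left
      have hb' : b = m + i := by rw [← e1]; exact hout.2
      have ha' : a = i := by rw [← e2, hi]
      rw [ha', hb']

/-- The international 2-cycles are cycles. -/
lemma pair_cycle (m : ℕ) (hm : 2 ≤ m) {i : ℕ} (hi : i < m - 1) :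
    IsCycle (myGraph m hm) [i, m + i] := by
  refine ⟨by simp, by simp; omega, ?_, ?_⟩
  · intro v hv
    simp only [List.mem_cons, List.not_mem_nil, or_false] at hv
    show v ∈ Finset.range (2 * m - 1)
    simp only [Finset.mem_range]
    omega
  · intro k hk
    simp only [List.length_cons, List.length_nil] at hk
    have hc0 : cyc [i, m + i] 0 = i := by simp [cyc]
    have hc1 : cyc [i, m + i] 1 = m + i := by simp [cyc]
    have hc2 : cyc [i, m + i] 2 = i := by simp [cyc]
    interval_cases k
    · rw [hc0, hc1, mem_arcs m hm]
      exact Or.inr (Or.inl ⟨by omega, rfl⟩)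
    · rw [hc1, hc2, mem_arcs m hm]
      exact Or.inr (Or.inr ⟨by omega, rfl⟩)

lemma pair_intl (m : ℕ) (hm : 2 ≤ m) {i : ℕ} (hi : i < m - 1) :
    IsInternational (myGraph m hm) [i, m + i] := by
  rintro ⟨jj, hjj⟩
  have h1 := hjj i (by simp)
  have h2 := hjj (m + i) (by simp)
  rw [country_zero m hm (by omega)] at h1
  rw [country_one m hm (by omega)] at h2
  rw [← h1] at h2
  exact absurd h2 (by decide)

lemma pair_gamma (m : ℕ) (hm : 2 ≤ m) {i : ℕ} (hi : i < m - 1) :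
    IsGammaCycle (myGraph m hm) (myParams m hm) [i, m + i] := by
  refine ⟨pair_cycle m hm hi, Or.inr ⟨pair_intl m hm hi, ?_, ?_, ?_⟩⟩
  · show (([i, m + i].length : ℕ) : ℕ∞) ≤ (myParams m hm).icl
    simp [myParams]
  · intro j k hk hseg
    show _ ≤ (⊤ : ℕ∞)
    exact le_top
  · intro j
    exact le_top

lemma cycUtil_pair (m : ℕ) (hm : 2 ≤ m) {i : ℕ} (hi : i < m - 1) :
    cycUtil (myGraph m hm) 0 [i, m + i] = 1 := by
  have h1 : (myGraph m hm).country i = 0 := country_zero m hm (by omega)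
  have h2 : (myGraph m hm).country (m + i) = 1 := country_one m hm (by omega)
  simp [cycUtil, h1, h2]

lemma cycUtil_pair' (m : ℕ) (hm : 2 ≤ m) {i : ℕ} (hi : i < m - 1) :
    cycUtil (myGraph m hm) 0 [m + i, i] = 1 := by
  have h1 : (myGraph m hm).country i = 0 := country_zero m hm (by omega)
  have h2 : (myGraph m hm).country (m + i) = 1 := country_one m hm (by omega)
  simp [cycUtil, h1, h2]

lemma cycUtil_ring (m : ℕ) (hm : 2 ≤ m) {l : List ℕ} (hall : ∀ v ∈ l, v < m) :
    cycUtil (myGraph m hm) 0 l = l.length := by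
  unfold cycUtil
  congr 1
  apply List.filter_eq_self.mpr
  intro v hv
  simp only [decide_eq_true_eq]
  exact country_zero m hm (hall v hv)

/-- A ring-type cycle contains every vertex `j < m`. -/
lemma ring_covers (m : ℕ) (hm : 2 ≤ m) {l : List ℕ} (hnd : l.Nodup)
    (hlen : l.length = m) (hall : ∀ v ∈ l, v < m) {j : ℕ} (hj : j < m) : j ∈ l := by
  have hsub : l.toFinset ⊆ Finset.range m := by
    intro v hv
    exact Finset.mem_range.mpr (hall v (List.mem_toFinset.mp hv))
  have hcard : (Finset.range m).card ≤ l.toFinset.card := by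
    rw [Finset.card_range, List.toFinset_card_of_nodup hnd, hlen]
  have heq : l.toFinset = Finset.range m := Finset.eq_of_subset_of_card_le hsub hcard
  have : j ∈ l.toFinset := heq ▸ Finset.mem_range.mpr hj
  exact List.mem_toFinset.mp this

/-- Any packing has size at most the number of vertices. -/
lemma packSize_le_card {n : ℕ} {G : PartGraph n} {P : Finset (List ℕ)}
    (hP : IsPacking G P) : packSize P ≤ G.verts.card := by
  have hdisj : ∀ l ∈ P, ∀ l' ∈ P, l ≠ l' → Disjoint l.toFinset l'.toFinset := by
    intro l hl l' hl' hne
    rw [Finset.disjoint_left]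
    intro v hv hv'
    exact hP.2 l hl l' hl' hne v (List.mem_toFinset.mp hv) (List.mem_toFinset.mp hv')
  have h1 : packSize P = (P.biUnion fun l => l.toFinset).card := by
    rw [Finset.card_biUnion hdisj]
    unfold packSize
    apply Finset.sum_congr rfl
    intro l hl
    rw [List.toFinset_card_of_nodup (hP.1 l hl).2.1]
  rw [h1]
  apply Finset.card_le_card
  intro v hv
  rw [Finset.mem_biUnion] at hv
  obtain ⟨l, hl, hvl⟩ := hv
  exact (hP.1 l hl).2.2.1 v (List.mem_toFinset.mp hvl)

/-- Key bound: for every `Γ`-packing `P` of the constructed instance,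
`packSize P + (m - 2) * u₀(P) ≤ m * (m - 1)`. -/
lemma pack_bound (m : ℕ) (hm : 2 ≤ m) {P : Finset (List ℕ)}
    (hP : IsGammaPackingG (myGraph m hm) (myParams m hm) P) :
    packSize P + (m - 2) * packUtil (myGraph m hm) 0 P ≤ m * (m - 1) := by
  obtain ⟨⟨hcyc, hdisj⟩, hgam⟩ := hP
  by_cases hr : ∃ l ∈ P, l.length = m ∧ ∀ v ∈ l, v < m
  · obtain ⟨l, hl, hlen, hall⟩ := hr
    have hnd : l.Nodup := (hcyc l hl).2.1
    have hPsingle : P = {l} := by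
      apply Finset.eq_singleton_iff_unique_mem.mpr
      refine ⟨hl, ?_⟩
      intro l' hl'
      by_contra hne
      rcases classify m hm (hcyc l' hl') with ⟨i, hi, hcase⟩ | ⟨hlen', hall'⟩
      · have hil' : i ∈ l' := by rcases hcase with h | h <;> simp [h]
        have hil : i ∈ l := ring_covers m hm hnd hlen hall (by omega)
        exact hdisj l' hl' l hl hne i hil' hil
      · have h0l' : (0 : ℕ) ∈ l' := by
          have h2 : 2 ≤ l'.length := (hcyc l' hl').1
          exact ring_covers m hm (hcyc l' hl').2.1 hlen' hall' (by omega)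
        have h0l : (0 : ℕ) ∈ l := ring_covers m hm hnd hlen hall (by omega)
        exact hdisj l' hl' l hl hne 0 h0l' h0l
    subst hPsingle
    rw [packSize, packUtil, Finset.sum_singleton, Finset.sum_singleton, hlen,
      cycUtil_ring m hm hall, hlen]
    obtain ⟨k, rfl⟩ := Nat.exists_eq_add_of_le hm
    have e1 : 2 + k - 2 = k := by omega
    have e2 : 2 + k - 1 = 1 + k := by omega
    rw [e1, e2]
    ring_nf
    omega
  · push_neg at hr
    -- all cycles are pair-type
    have hpair : ∀ l ∈ P, ∃ i, i < m - 1 ∧ (l = [i, m + i] ∨ l = [m + i, i]) := by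
      intro l hl
      rcases classify m hm (hcyc l hl) with h | ⟨h1, h2⟩
      · exact h
      · obtain ⟨v, hvl, hvm⟩ := hr l hl h1
        exact absurd (h2 v hvl) (by omega)
    -- the labelling map
    set f : List ℕ → ℕ := fun l => if l.headI < m then l.headI else l.getD 1 0 with hf
    have hfval : ∀ l ∈ P, ∀ i, i < m - 1 → (l = [i, m + i] ∨ l = [m + i, i]) → f l = i := by
      intro l hl i hi hcase
      rcases hcase with rfl | rfl
      · simp only [hf, List.headI]
        exact if_pos (show i < m by omega)
      · simp only [hf, List.headI]
        exact (if_neg (show ¬ (m + i < m) by omega)).trans (by simp [List.getD])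
    have hmapsto : ∀ l ∈ P, f l ∈ Finset.range (m - 1) := by
      intro l hl
      obtain ⟨i, hi, hcase⟩ := hpair l hl
      rw [hfval l hl i hi hcase]
      exact Finset.mem_range.mpr hi
    have hinj : Set.InjOn f P := by
      intro l hl l' hl' hfe
      obtain ⟨i, hi, hcase⟩ := hpair l hl
      obtain ⟨i', hi', hcase'⟩ := hpair l' hl'
      rw [hfval l hl i hi hcase, hfval l' hl' i' hi' hcase'] at hfe
      subst hfe
      by_contra hne
      have hil : i ∈ l := by rcases hcase with rfl | rfl <;> simp
      have hil' : i ∈ l' := by rcases hcase' with rfl | rfl <;> simp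
      exact hdisj l hl l' hl' hne i hil hil'
    have hcard : P.card ≤ m - 1 := by
      have := Finset.card_le_card_of_injOn f hmapsto hinj
      rwa [Finset.card_range] at this
    have hsize : packSize P = 2 * P.card := by
      unfold packSize
      rw [Finset.sum_congr rfl (fun l hl => ?_), Finset.sum_const, smul_eq_mul, mul_comm]
      obtain ⟨i, hi, hcase⟩ := hpair l hl
      rcases hcase with rfl | rfl <;> simp
    have hutil : packUtil (myGraph m hm) 0 P = P.card := by
      unfold packUtil
      rw [Finset.sum_congr rfl (fun l hl => ?_), Finset.sum_const, smul_eq_mul, mul_one]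
      obtain ⟨i, hi, hcase⟩ := hpair l hl
      rcases hcase with rfl | rfl
      · exact cycUtil_pair m hm hi
      · exact cycUtil_pair' m hm hi
    rw [hsize, hutil]
    have : 2 * P.card + (m - 2) * P.card = m * P.card := by
      rw [← Nat.add_mul]
      congr 1
      omega
    rw [this]
    exact Nat.mul_le_mul_left m hcard

/-- The national ring is a cycle. -/
lemma ring_cycle (m : ℕ) (hm : 2 ≤ m) : IsCycle (myGraph m hm) (List.range m) := by
  refine ⟨by simpa using hm, List.nodup_range, ?_, ?_⟩
  · intro v hv
    rw [List.mem_range] at hv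
    show v ∈ Finset.range (2 * m - 1)
    simp only [Finset.mem_range]
    omega
  · intro k hk
    rw [List.length_range] at hk
    have hcy : ∀ k' : ℕ, cyc (List.range m) k' = k' % m := by
      intro k'
      have h0 : 0 < (List.range m).length := by simp; omega
      rw [cyc_eq_getElem _ h0]
      simp [List.length_range]
    rw [hcy k, hcy (k + 1), mem_arcs m hm]
    left
    refine ⟨Nat.mod_lt _ (by omega), ?_⟩
    conv_lhs => rw [Nat.add_mod]
    rw [Nat.mod_eq_of_lt (show 1 < m by omega)]

lemma ring_national (m : ℕ) (hm : 2 ≤ m) :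
    IsNationalTo (myGraph m hm) (List.range m) 0 := by
  intro v hv
  rw [List.mem_range] at hv
  exact country_zero m hm hv

/-- `natSize` of country `0` is at least `m`. -/
lemma nat_lower (m : ℕ) (hm : 2 ≤ m) :
    (m : ℕ) ≤ natSize (myI m hm) (0 : Fin 2) := by
  apply le_csSup
  · refine ⟨(myI m hm).G.verts.card, ?_⟩
    rintro x ⟨P, hP, _, _, rfl⟩
    exact packSize_le_card hP
  · refine ⟨{List.range m}, ?_, ?_, ?_, ?_⟩
    · constructor
      · intro l hl
        rw [Finset.mem_singleton] at hl
        subst hl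
        exact ring_cycle m hm
      · intro l hl l' hl' hne
        rw [Finset.mem_singleton] at hl hl'
        subst hl; subst hl'
        exact absurd rfl hne
    · intro l hl
      rw [Finset.mem_singleton] at hl
      subst hl
      exact ring_national m hm
    · intro l hl
      rw [Finset.mem_singleton] at hl
      subst hl
      show ((List.range m).length : ℕ∞) ≤ (myParams m hm).ncl 0
      simp [myParams]
    · rw [packSize, Finset.sum_singleton, List.length_range]

/-- The packing of all international 2-cycles. -/
noncomputable def pairPack (m : ℕ) : Finset (List ℕ) :=
  (Finset.range (m - 1)).image fun i => [i, m + i]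

lemma mem_pairPack (m : ℕ) {l : List ℕ} :
    l ∈ pairPack m ↔ ∃ i, i < m - 1 ∧ l = [i, m + i] := by
  unfold pairPack
  simp only [Finset.mem_image, Finset.mem_range]
  constructor
  · rintro ⟨i, hi, rfl⟩; exact ⟨i, hi, rfl⟩
  · rintro ⟨i, hi, rfl⟩; exact ⟨i, hi, rfl⟩

lemma pairPack_gamma (m : ℕ) (hm : 2 ≤ m) :
    IsGammaPackingG (myGraph m hm) (myParams m hm) (pairPack m) := by
  refine ⟨⟨?_, ?_⟩, ?_⟩
  · intro l hl
    obtain ⟨i, hi, rfl⟩ := (mem_pairPack m).mp hl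
    exact pair_cycle m hm hi
  · intro l hl l' hl' hne v hv hv'
    obtain ⟨i, hi, rfl⟩ := (mem_pairPack m).mp hl
    obtain ⟨i', hi', rfl⟩ := (mem_pairPack m).mp hl'
    have hne' : i ≠ i' := by rintro rfl; exact hne rfl
    simp only [List.mem_cons, List.not_mem_nil, or_false] at hv hv'
    omega
  · intro l hl
    obtain ⟨i, hi, rfl⟩ := (mem_pairPack m).mp hl
    exact pair_gamma m hm hi

lemma pairPack_size (m : ℕ) (hm : 2 ≤ m) : packSize (pairPack m) = 2 * (m - 1) := by
  unfold packSize pairPack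
  rw [Finset.sum_image (by intro a _ b _ h; simpa using h)]
  simp [mul_comm]

/-- `optSize` of the constructed instance is at least `2 * (m - 1)`. -/
lemma opt_lower (m : ℕ) (hm : 2 ≤ m) : 2 * (m - 1) ≤ optSize (myI m hm) := by
  apply le_csSup
  · refine ⟨(myI m hm).G.verts.card, ?_⟩
    rintro x ⟨P, hP, rfl⟩
    exact packSize_le_card hP.1
  · exact ⟨pairPack m, pairPack_gamma m hm, pairPack_size m hm⟩

/-- There is an international `Γ`-cycle. -/
lemma exists_intl (m : ℕ) (hm : 2 ≤ m) :
    ∃ l, IsIntlGammaCycle (myI m hm) l :=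
  ⟨[0, m + 0], ⟨pair_gamma m hm (by omega), pair_intl m hm (by omega)⟩⟩

/-- `cInt` of the constructed instance is at most 2. -/
lemma cInt_le (m : ℕ) (hm : 2 ≤ m) : cInt (myI m hm) ≤ 2 := by
  apply csSup_le
  · obtain ⟨l, hl⟩ := exists_intl m hm
    exact ⟨l.length, l, hl, rfl⟩
  · rintro s ⟨l, ⟨⟨hcyc, hgam⟩, hintl⟩, rfl⟩
    rcases hgam with ⟨i, hnat, _⟩ | ⟨_, hlen, _, _⟩
    · exact absurd ⟨i, hnat⟩ hintl
    · have h2 : ((l.length : ℕ) : ℕ∞) ≤ ((2 : ℕ) : ℕ∞) := by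
        simpa [myI, myParams] using hlen
      exact_mod_cast h2

/-- The constructed instance is near-perfect. -/
lemma near_perfect (m : ℕ) (hm : 2 ≤ m) : NearPerfectInstance (myI m hm) := by
  refine ⟨pairPack m, pairPack_gamma m hm, ?_⟩
  have huncov : uncovered (myI m hm) (pairPack m) = {m - 1} := by
    ext v
    simp only [uncovered, Finset.mem_filter, Finset.mem_singleton]
    constructor
    · rintro ⟨hv, hall⟩
      have hv' : v < 2 * m - 1 := by
        simpa [myI, myGraph] using hv
      by_contra hne
      rcases Nat.lt_or_ge v m with h1 | h1
      · have hvlt : v < m - 1 := by omega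
        have := hall [v, m + v] ((mem_pairPack m).mpr ⟨v, hvlt, rfl⟩)
        simp at this
      · have hvlt : v - m < m - 1 := by omega
        have := hall [v - m, m + (v - m)] ((mem_pairPack m).mpr ⟨v - m, hvlt, rfl⟩)
        simp at this
        omega
    · rintro rfl
      constructor
      · show m - 1 ∈ Finset.range (2 * m - 1)
        simp only [Finset.mem_range]
        omega
      · intro l hl
        obtain ⟨i, hi, rfl⟩ := (mem_pairPack m).mp hl
        simp only [List.mem_cons, List.not_mem_nil, or_false]
        push_neg
        omega
  rw [huncov]
  simp

/-- Bound on the expected social welfare of any IR mechanism on the instance. -/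
lemma sw_le (m : ℕ) (hm : 2 ≤ m) (M : Mechanism) (hIR : IndRational M) :
    sw M (myI m hm) ≤ (m : ℝ) := by
  set I := myI m hm with hI
  set D := M.dist I with hD
  have hswE : sw M I = ∑ P ∈ D.support, D P * (packSize P : ℝ) := by
    rw [sw, Finsupp.sum]
  have hexpE : expUtil M I (0 : Fin 2) =
      ∑ P ∈ D.support, D P * (packUtil I.G (0 : Fin 2) P : ℝ) := by
    rfl
  have hsum1 : ∑ P ∈ D.support, D P = 1 := by
    have := M.sum_one I
    rwa [Finsupp.sum] at this
  have key : ∀ P ∈ D.support, (packSize P : ℝ) + ((m : ℝ) - 2) * (packUtil I.G (0 : Fin 2) P : ℝ)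
      ≤ (m : ℝ) * ((m : ℝ) - 1) := by
    intro P hP
    have hgp : IsGammaPacking I P := M.supp I P (Finsupp.mem_support_iff.mp hP)
    have hb := pack_bound m hm hgp
    have hb' : ((packSize P + (m - 2) * packUtil (myGraph m hm) 0 P : ℕ) : ℝ)
        ≤ ((m * (m - 1) : ℕ) : ℝ) := Nat.cast_le.mpr hb
    push_cast [Nat.cast_sub (show 2 ≤ m from hm), Nat.cast_sub (show 1 ≤ m by omega)] at hb'
    exact hb'
  have hEU : (m : ℝ) ≤ expUtil M I (0 : Fin 2) := by
    have h1 : (m : ℕ) ≤ natSize I (0 : Fin 2) := nat_lower m hm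
    have h2 := hIR I (0 : Fin 2)
    calc (m : ℝ) ≤ (natSize I (0 : Fin 2) : ℝ) := Nat.cast_le.mpr h1
      _ ≤ expUtil M I (0 : Fin 2) := h2
  have hstep : sw M I + ((m : ℝ) - 2) * expUtil M I (0 : Fin 2) ≤ (m : ℝ) * ((m : ℝ) - 1) := by
    rw [hswE, hexpE, Finset.mul_sum, ← Finset.sum_add_distrib]
    calc ∑ P ∈ D.support, (D P * (packSize P : ℝ) +
          ((m : ℝ) - 2) * (D P * (packUtil I.G (0 : Fin 2) P : ℝ)))
        = ∑ P ∈ D.support, D P * ((packSize P : ℝ) +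
          ((m : ℝ) - 2) * (packUtil I.G (0 : Fin 2) P : ℝ)) := by
          apply Finset.sum_congr rfl
          intro P _
          ring
      _ ≤ ∑ P ∈ D.support, D P * ((m : ℝ) * ((m : ℝ) - 1)) := by
          apply Finset.sum_le_sum
          intro P hP
          exact mul_le_mul_of_nonneg_left (key P hP) (M.nonneg I P)
      _ = (∑ P ∈ D.support, D P) * ((m : ℝ) * ((m : ℝ) - 1)) := by
          rw [Finset.sum_mul]
      _ = (m : ℝ) * ((m : ℝ) - 1) := by rw [hsum1, one_mul]
  have hm2 : (0 : ℝ) ≤ (m : ℝ) - 2 := by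
    have : (2 : ℝ) ≤ (m : ℝ) := by exact_mod_cast hm
    linarith
  nlinarith [mul_le_mul_of_nonneg_left hEU hm2]

lemma sw_nonneg (M : Mechanism) (I : IKEP) : 0 ≤ sw M I := by
  rw [sw, Finsupp.sum]
  apply Finset.sum_nonneg
  intro P _
  exact mul_nonneg (M.nonneg I P) (Nat.cast_nonneg _)

end IRLB

/-- The lower bound of `c_int` on the approximation ratio of
individually rational mechanisms holds even restricted to near-perfect
instances: for every `ε > 0` and every IR mechanism `ℳ` there is a
near-perfect instance with an international `Γ`-cycle on which
`opt(I) > (1 - ε)·c_int(I)·SW(ℳ(I))`. -/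
theorem IR_lower_bound_cInt_nearPerfect (ε : ℝ) (hε : 0 < ε) (M : Mechanism)
    (hIR : IndRational M) :
    ∃ I : IKEP, NearPerfectInstance I ∧ (∃ l, IsIntlGammaCycle I l) ∧
      (1 - ε) * (cInt I : ℝ) * sw M I < (optSize I : ℝ) := by
  set m : ℕ := ⌈1 / ε⌉₊ + 1 with hmdef
  have hceil : 0 < ⌈1 / ε⌉₊ := Nat.ceil_pos.mpr (by positivity)
  have hm : 2 ≤ m := by omega
  have hεm : 1 < ε * (m : ℝ) := by
    have h1 : 1 / ε ≤ (⌈1 / ε⌉₊ : ℝ) := Nat.le_ceil _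
    have h2 : (1 : ℝ) / ε < (m : ℝ) := by
      rw [hmdef]
      push_cast
      linarith
    calc (1 : ℝ) = ε * (1 / ε) := by field_simp
      _ < ε * (m : ℝ) := by exact mul_lt_mul_of_pos_left h2 hε
  refine ⟨IRLB.myI m hm, IRLB.near_perfect m hm, IRLB.exists_intl m hm, ?_⟩
  have hcInt : (cInt (IRLB.myI m hm) : ℝ) ≤ 2 := by
    exact_mod_cast IRLB.cInt_le m hm
  have hcInt0 : (0 : ℝ) ≤ (cInt (IRLB.myI m hm) : ℝ) := Nat.cast_nonneg _
  have hsw : sw M (IRLB.myI m hm) ≤ (m : ℝ) := IRLB.sw_le m hm M hIR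
  have hsw0 : 0 ≤ sw M (IRLB.myI m hm) := IRLB.sw_nonneg M _
  have hopt : 2 * ((m : ℝ) - 1) ≤ (optSize (IRLB.myI m hm) : ℝ) := by
    have h1 := IRLB.opt_lower m hm
    have h2 : ((2 * (m - 1) : ℕ) : ℝ) ≤ ((optSize (IRLB.myI m hm) : ℕ) : ℝ) :=
      Nat.cast_le.mpr h1
    rw [Nat.cast_mul, Nat.cast_sub (show 1 ≤ m by omega)] at h2
    simpa using h2
  have hmR : (2 : ℝ) ≤ (m : ℝ) := by exact_mod_cast hm
  rcases le_or_gt ε 1 with hε1 | hε1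
  · have h0 : (0 : ℝ) ≤ 1 - ε := by linarith
    have h1 : (1 - ε) * (cInt (IRLB.myI m hm) : ℝ) ≤ (1 - ε) * 2 :=
      mul_le_mul_of_nonneg_left hcInt h0
    have h2 : (1 - ε) * (cInt (IRLB.myI m hm) : ℝ) * sw M (IRLB.myI m hm) ≤
        ((1 - ε) * 2) * sw M (IRLB.myI m hm) :=
      mul_le_mul_of_nonneg_right h1 hsw0
    have h3 : ((1 - ε) * 2) * sw M (IRLB.myI m hm) ≤ ((1 - ε) * 2) * (m : ℝ) :=
      mul_le_mul_of_nonneg_left hsw (by linarith)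
    have h4 : ((1 - ε) * 2) * (m : ℝ) = 2 * (m : ℝ) - 2 * (ε * (m : ℝ)) := by ring
    nlinarith
  · have h0 : 1 - ε < 0 := by linarith
    have h1 : (1 - ε) * (cInt (IRLB.myI m hm) : ℝ) ≤ 0 :=
      mul_nonpos_of_nonpos_of_nonneg (by linarith) hcInt0
    have h2 : (1 - ε) * (cInt (IRLB.myI m hm) : ℝ) * sw M (IRLB.myI m hm) ≤ 0 :=
      mul_nonpos_of_nonpos_of_nonneg h1 hsw0
    have h3 : (0 : ℝ) < 2 * ((m : ℝ) - 1) := by linarith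
    linarith
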